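/- Let ℓ ≥ 2 and let G be a graph on n vertices with n > k such that every k-subset of vertices is a (1, ≤ℓ)-identifying set. Then for every vertex x: n − k + ℓ + 1 ≤ |N[x]| ≤ k − ℓ; for all distinct vertices x, y: |N[x] ∩ N[y]| ≤ k − 2ℓ + 1; and moreover n ≤ 2k − 2ℓ − 1 and k ≥ 2ℓ + 2. -/

import Mathlib

open Set

variable {V : Type*}

/-- The closed neighbourhood `N[x]` of a vertex. -/
def closedNbhd (G : SimpleGraph V) (x : V) : Set V :=
  insert x (G.neighborSet x)

/-- `C` is an identifying set: all sets `N[x] ∩ C` are nonempty and pairwise distinct. -/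
def IsIdentifying (G : SimpleGraph V) (C : Set V) : Prop :=
  (∀ x : V, (closedNbhd G x ∩ C).Nonempty) ∧
    ∀ x y : V, closedNbhd G x ∩ C = closedNbhd G y ∩ C → x = y

/-- Every `k`-subset of vertices is an identifying set. -/
def EveryKIdentifying (G : SimpleGraph V) (k : ℕ) : Prop :=
  ∀ C : Set V, C.ncard = k → IsIdentifying G C

/-- `N[X] = ⋃ x ∈ X, N[x]`. -/
def nbhdSet (G : SimpleGraph V) (X : Set V) : Set V :=
  ⋃ x ∈ X, closedNbhd G x

/-- `C` is `(1, ≤ ℓ)`-identifying. -/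
def IsLIdentifying (G : SimpleGraph V) (ℓ : ℕ) (C : Set V) : Prop :=
  ∀ X Y : Set V, X.ncard ≤ ℓ → Y.ncard ≤ ℓ → X ≠ Y →
    nbhdSet G X ∩ C ≠ nbhdSet G Y ∩ C

/-- Every `k`-subset of vertices is a `(1, ≤ ℓ)`-identifying set. -/
def EveryKLIdentifying (G : SimpleGraph V) (k ℓ : ℕ) : Prop :=
  ∀ C : Set V, C.ncard = k → IsLIdentifying G ℓ C

section Aux

variable {G : SimpleGraph V}

lemma cn_self (G : SimpleGraph V) (x : V) : x ∈ closedNbhd G x := Set.mem_insert _ _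

lemma cn_comm {x y : V} : y ∈ closedNbhd G x ↔ x ∈ closedNbhd G y := by
  simp only [closedNbhd, Set.mem_insert_iff, SimpleGraph.mem_neighborSet]
  constructor
  · rintro (rfl | h)
    · exact Or.inl rfl
    · exact Or.inr h.symm
  · rintro (rfl | h)
    · exact Or.inl rfl
    · exact Or.inr h.symm

lemma mem_nbhdSet' {X : Set V} {w : V} :
    w ∈ nbhdSet G X ↔ ∃ x ∈ X, w ∈ closedNbhd G x := by
  simp [nbhdSet]

lemma nbhdSet_insert' (a : V) (X : Set V) :
    nbhdSet G (insert a X) = closedNbhd G a ∪ nbhdSet G X := by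
  simp [nbhdSet]

lemma nbhdSet_empty' : nbhdSet G (∅ : Set V) = ∅ := by simp [nbhdSet]

lemma nbhdSet_singleton' (x : V) : nbhdSet G ({x} : Set V) = closedNbhd G x := by
  simp [nbhdSet]

lemma subset_nbhdSet' {X : Set V} : X ⊆ nbhdSet G X :=
  fun x hx => mem_nbhdSet'.2 ⟨x, hx, cn_self G x⟩

lemma nbhdSet_mono' {X Y : Set V} (h : X ⊆ Y) : nbhdSet G X ⊆ nbhdSet G Y := by
  intro w hw
  obtain ⟨x, hx, hwx⟩ := mem_nbhdSet'.1 hw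
  exact mem_nbhdSet'.2 ⟨x, h hx, hwx⟩

variable [Fintype V] {n k l : ℕ}

lemma disj_count {A B T : Set V} (hA : A ⊆ T) (hB : B ⊆ T) (hd : ∀ w ∈ A, w ∉ B) :
    A.ncard + B.ncard ≤ T.ncard := by
  have hdisj : Disjoint A B := Set.disjoint_left.2 hd
  rw [← Set.ncard_union_eq hdisj A.toFinite B.toFinite]
  exact Set.ncard_le_ncard (Set.union_subset hA hB) T.toFinite

lemma keyA (hn : Fintype.card V = n) (hnk : k < n) (h : EveryKLIdentifying G k l)
    {X Y : Set V} (hX : X.ncard ≤ l) (hY : Y.ncard ≤ l) (hne : X ≠ Y) :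
    n + 1 ≤ k + (symmDiff (nbhdSet G X) (nbhdSet G Y)).ncard := by
  by_contra hc
  push_neg at hc
  set D := symmDiff (nbhdSet G X) (nbhdSet G Y) with hD
  have hcompl : D.ncard + Dᶜ.ncard = n := by
    rw [Set.ncard_add_ncard_compl, Nat.card_eq_fintype_card, hn]
  have hk : k ≤ Dᶜ.ncard := by omega
  obtain ⟨C, hCsub, hCcard⟩ := Set.exists_subset_card_eq hk
  have hid := h C hCcard X Y hX hY hne
  apply hid
  ext w
  simp only [Set.mem_inter_iff]
  constructor
  · rintro ⟨hw1, hw2⟩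
    refine ⟨?_, hw2⟩
    have hwD : w ∉ D := hCsub hw2
    by_contra hw3
    exact hwD (Set.mem_symmDiff.2 (Or.inl ⟨hw1, hw3⟩))
  · rintro ⟨hw1, hw2⟩
    refine ⟨?_, hw2⟩
    have hwD : w ∉ D := hCsub hw2
    by_contra hw3
    exact hwD (Set.mem_symmDiff.2 (Or.inr ⟨hw1, hw3⟩))

lemma keyA_nested (hn : Fintype.card V = n) (hnk : k < n) (h : EveryKLIdentifying G k l)
    {X Y : Set V} (hX : X.ncard ≤ l) (hY : Y.ncard ≤ l) (hne : X ≠ Y)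
    (hsub : nbhdSet G Y ⊆ nbhdSet G X) :
    n + 1 ≤ k + (nbhdSet G X \ nbhdSet G Y).ncard := by
  have key := keyA hn hnk h hX hY hne
  have heq : symmDiff (nbhdSet G X) (nbhdSet G Y) = nbhdSet G X \ nbhdSet G Y := by
    ext w
    constructor
    · intro hw
      rcases Set.mem_symmDiff.1 hw with ⟨h1, h2⟩ | ⟨h1, h2⟩
      · exact ⟨h1, h2⟩
      · exact absurd (hsub h1) h2
    · intro hw
      exact Set.mem_symmDiff.2 (Or.inl ⟨hw.1, hw.2⟩)
  rwa [heq] at key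

lemma n_ge (hn : Fintype.card V = n) (hnk : k < n) (h : EveryKLIdentifying G k l)
    (hl : 2 ≤ l) : l + 1 ≤ n := by
  by_contra hc
  push_neg at hc
  have hpos : 0 < n := by omega
  have hne : Nonempty V := Fintype.card_pos_iff.1 (by omega)
  obtain ⟨x⟩ := hne
  have hXc : (Set.univ : Set V).ncard = n := by
    rw [Set.ncard_univ, Nat.card_eq_fintype_card, hn]
  have hYc : (Set.univ \ {x} : Set V).ncard ≤ n := by
    calc (Set.univ \ {x} : Set V).ncard ≤ (Set.univ : Set V).ncard :=
          Set.ncard_le_ncard diff_subset (Set.toFinite _)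
      _ = n := hXc
  have hneq : (Set.univ : Set V) ≠ Set.univ \ {x} := by
    intro hEq
    have hx : x ∈ (Set.univ \ {x} : Set V) := hEq ▸ Set.mem_univ x
    simp at hx
  have key := keyA hn hnk h (X := (Set.univ : Set V)) (Y := Set.univ \ {x})
    (by omega) (by omega) hneq
  have hsub : symmDiff (nbhdSet G Set.univ) (nbhdSet G (Set.univ \ {x})) ⊆ {x} := by
    intro w hw
    rcases Set.mem_symmDiff.1 hw with ⟨h1, h2⟩ | ⟨h1, h2⟩
    · by_contra hwx
      have hwx' : w ≠ x := by simpa using hwx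
      exact h2 (mem_nbhdSet'.2 ⟨w, ⟨Set.mem_univ w, by simpa using hwx'⟩, cn_self G w⟩)
    · exact absurd (nbhdSet_mono' diff_subset h1) h2
  have hle : (symmDiff (nbhdSet G Set.univ) (nbhdSet G (Set.univ \ {x}))).ncard ≤ 1 := by
    calc _ ≤ ({x} : Set V).ncard := Set.ncard_le_ncard hsub (Set.toFinite _)
      _ = 1 := Set.ncard_singleton x
  omega

lemma deg_ge (hn : Fintype.card V = n) (hnk : k < n) (h : EveryKLIdentifying G k l)
    (hl : 2 ≤ l) (x : V) : n + 1 ≤ k + (closedNbhd G x).ncard := by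
  have key := keyA_nested hn hnk h (X := ({x} : Set V)) (Y := (∅ : Set V))
    (by rw [Set.ncard_singleton]; omega) (by simp) (Set.singleton_ne_empty x)
    (by rw [nbhdSet_empty']; exact Set.empty_subset _)
  rwa [nbhdSet_singleton', nbhdSet_empty', Set.diff_empty] at key

lemma L1 (hn : Fintype.card V = n) (hnk : k < n) (h : EveryKLIdentifying G k l)
    {x : V} {S : Set V} (hS : S ⊆ closedNbhd G x) (hx : x ∉ S)
    (hne : S.Nonempty) (hcard : S.ncard + 1 ≤ l) :
    n + 2 + S.ncard ≤ k + (closedNbhd G x).ncard := by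
  have hXcard : (insert x S).ncard = S.ncard + 1 := Set.ncard_insert_of_notMem hx (Set.toFinite S)
  have hneq : insert x S ≠ S := by
    intro hEq
    exact hx (hEq ▸ Set.mem_insert x S)
  have key := keyA_nested hn hnk h (X := insert x S) (Y := S) (by omega) (by omega) hneq
    (nbhdSet_mono' (Set.subset_insert x S))
  set D := nbhdSet G (insert x S) \ nbhdSet G S with hDdef
  have hD : D ⊆ closedNbhd G x := by
    intro w hw
    obtain ⟨a, ha, hwa⟩ := mem_nbhdSet'.1 hw.1
    rcases Set.mem_insert_iff.1 ha with rfl | haS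
    · exact hwa
    · exact absurd (mem_nbhdSet'.2 ⟨a, haS, hwa⟩) hw.2
  have hP : insert x S ⊆ closedNbhd G x := Set.insert_subset (cn_self G x) hS
  have hPD : ∀ w ∈ D, w ∉ insert x S := by
    intro w hw hwP
    apply hw.2
    rcases Set.mem_insert_iff.1 hwP with rfl | hwS
    · obtain ⟨s, hs⟩ := hne
      exact mem_nbhdSet'.2 ⟨s, hs, cn_comm.1 (hS hs)⟩
    · exact subset_nbhdSet' hwS
  have hcount := disj_count hD hP hPD
  rw [hXcard] at hcount
  omega

lemma lower (hn : Fintype.card V = n) (hnk : k < n) (h : EveryKLIdentifying G k l)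
    (hl : 2 ≤ l) (x : V) : n + 1 + l ≤ k + (closedNbhd G x).ncard := by
  have hbase : ∀ j, j + 2 ≤ l → n + 3 + j ≤ k + (closedNbhd G x).ncard := by
    intro j
    induction j with
    | zero =>
      intro hj
      have hdeg := deg_ge hn hnk h hl x
      have hdiffcard : (closedNbhd G x \ {x}).ncard = (closedNbhd G x).ncard - 1 :=
        Set.ncard_diff_singleton_of_mem (cn_self G x)
      have h1 : 1 ≤ (closedNbhd G x \ {x}).ncard := by omega
      obtain ⟨S, hSsub, hScard⟩ := Set.exists_subset_card_eq h1
      have hres := L1 hn hnk h (hSsub.trans diff_subset)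
        (fun hmem => (hSsub hmem).2 rfl)
        (Set.nonempty_of_ncard_ne_zero (by omega)) (by omega)
      omega
    | succ j ih =>
      intro hj
      have prev := ih (by omega)
      have hdiffcard : (closedNbhd G x \ {x}).ncard = (closedNbhd G x).ncard - 1 :=
        Set.ncard_diff_singleton_of_mem (cn_self G x)
      have h1 : j + 2 ≤ (closedNbhd G x \ {x}).ncard := by omega
      obtain ⟨S, hSsub, hScard⟩ := Set.exists_subset_card_eq h1
      have hres := L1 hn hnk h (hSsub.trans diff_subset)
        (fun hmem => (hSsub hmem).2 rfl)
        (Set.nonempty_of_ncard_ne_zero (by omega)) (by omega)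
      omega
  have := hbase (l - 2) (by omega)
  omega

lemma UBstep (hn : Fintype.card V = n) (hnk : k < n) (h : EveryKLIdentifying G k l)
    (hl : 2 ≤ l) {x : V} {S : Set V} (hS : S ⊆ (closedNbhd G x)ᶜ)
    (hcard : S.ncard + 2 ≤ l) :
    n + 2 + S.ncard ≤ k + ((closedNbhd G x)ᶜ).ncard := by
  set U := (closedNbhd G x)ᶜ with hUdef
  set W := U \ nbhdSet G S with hWdef
  have hxS : x ∉ S := fun hxs => (hS hxs) (cn_self G x)
  have hYcard : (insert x S).ncard = S.ncard + 1 :=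
    Set.ncard_insert_of_notMem hxS (Set.toFinite S)
  have hstep : ∀ t, t ∉ insert x S → n + 1 ≤ k + (closedNbhd G t ∩ W).ncard := by
    intro t ht
    have hXcard : (insert t (insert x S)).ncard = S.ncard + 2 := by
      rw [Set.ncard_insert_of_notMem ht (Set.toFinite _), hYcard]
    have hneq : insert t (insert x S) ≠ insert x S := fun hEq => ht (hEq ▸ Set.mem_insert t _)
    have key := keyA_nested hn hnk h (X := insert t (insert x S)) (Y := insert x S)
      (by omega) (by omega) hneq (nbhdSet_mono' (Set.subset_insert _ _))
    have hEq : nbhdSet G (insert t (insert x S)) \ nbhdSet G (insert x S)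
        = closedNbhd G t ∩ W := by
      ext w
      simp only [nbhdSet_insert', Set.mem_diff, Set.mem_union, Set.mem_inter_iff, hWdef,
        hUdef, Set.mem_compl_iff]
      tauto
    rwa [hEq] at key
  have hnl := n_ge hn hnk h hl
  have ht0 : ∃ t, t ∉ insert x S := by
    by_contra hc
    push_neg at hc
    have huniv : (insert x S : Set V) = Set.univ := Set.eq_univ_of_forall hc
    have h2 : (insert x S).ncard = n := by
      rw [huniv, Set.ncard_univ, Nat.card_eq_fintype_card, hn]
    omega
  obtain ⟨t0, ht0⟩ := ht0
  have hmono0 : (closedNbhd G t0 ∩ W).ncard ≤ W.ncard :=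
    Set.ncard_le_ncard inter_subset_right (Set.toFinite _)
  have hWd : n + 1 ≤ k + W.ncard := by
    have := hstep t0 ht0
    omega
  have hWd1 : n + 2 ≤ k + W.ncard := by
    by_contra hc
    push_neg at hc
    have hWsub : ∀ t, t ∉ insert x S → W ⊆ closedNbhd G t := by
      intro t ht
      have h1 := hstep t ht
      have h3 : W.ncard ≤ (closedNbhd G t ∩ W).ncard := by omega
      have hEq := Set.eq_of_subset_of_ncard_le inter_subset_right h3 (Set.toFinite _)
      intro w hw
      rw [← hEq] at hw
      exact hw.1
    have hW2 : 1 < W.ncard := by omega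
    obtain ⟨u, hu, v, hv, huv⟩ := (Set.one_lt_ncard (Set.toFinite W)).1 hW2
    have hWU : W ⊆ U := diff_subset
    have hnotin : ∀ w, w ∈ W → w ∉ insert x S := by
      intro w hw hmem
      rcases Set.mem_insert_iff.1 hmem with rfl | hs
      · exact (hWU hw) (cn_self G w)
      · exact hw.2 (subset_nbhdSet' hs)
    have huS := hnotin u hu
    have hvS := hnotin v hv
    have hXc : (insert u (insert x S)).ncard = S.ncard + 2 := by
      rw [Set.ncard_insert_of_notMem huS (Set.toFinite _), hYcard]
    have hYc : (insert v (insert x S)).ncard = S.ncard + 2 := by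
      rw [Set.ncard_insert_of_notMem hvS (Set.toFinite _), hYcard]
    have hneq : insert u (insert x S) ≠ insert v (insert x S) := by
      intro hEq
      have : u ∈ insert v (insert x S) := hEq ▸ Set.mem_insert u _
      rcases Set.mem_insert_iff.1 this with rfl | hmem
      · exact huv rfl
      · exact huS hmem
    have key := keyA hn hnk h (X := insert u (insert x S)) (Y := insert v (insert x S))
      (by omega) (by omega) hneq
    obtain ⟨w, hw⟩ := Set.nonempty_of_ncard_ne_zero
      (s := symmDiff (nbhdSet G (insert u (insert x S))) (nbhdSet G (insert v (insert x S))))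
      (by omega)
    have hmemW : ∀ z, z ∈ (closedNbhd G x)ᶜ → z ∉ nbhdSet G S → z ∈ W := by
      intro z h1 h2
      exact ⟨h1, h2⟩
    rcases Set.mem_symmDiff.1 hw with ⟨h1, h2⟩ | ⟨h1, h2⟩
    · rw [nbhdSet_insert', nbhdSet_insert'] at h2
      have hwW : w ∈ W :=
        ⟨fun hwNx => h2 (Set.mem_union_right _ (Set.mem_union_left _ hwNx)),
          fun hwNS => h2 (Set.mem_union_right _ (Set.mem_union_right _ hwNS))⟩
      exact h2 (Set.mem_union_left _ (hWsub v hvS hwW))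
    · rw [nbhdSet_insert', nbhdSet_insert'] at h2
      have hwW : w ∈ W :=
        ⟨fun hwNx => h2 (Set.mem_union_right _ (Set.mem_union_left _ hwNx)),
          fun hwNS => h2 (Set.mem_union_right _ (Set.mem_union_right _ hwNS))⟩
      exact h2 (Set.mem_union_left _ (hWsub u huS hwW))
  have hdisj : W.ncard + S.ncard ≤ U.ncard :=
    disj_count diff_subset hS (fun w hw hwS => hw.2 (subset_nbhdSet' hwS))
  omega

lemma upper (hn : Fintype.card V = n) (hnk : k < n) (h : EveryKLIdentifying G k l)
    (hl : 2 ≤ l) (x : V) : n + l ≤ k + ((closedNbhd G x)ᶜ).ncard := by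
  have haux : ∀ j, j + 2 ≤ l → n + 2 + j ≤ k + ((closedNbhd G x)ᶜ).ncard := by
    intro j
    induction j with
    | zero =>
      intro hj
      have := UBstep hn hnk h hl (x := x) (S := (∅ : Set V)) (Set.empty_subset _)
        (by simpa using hj)
      simpa using this
    | succ j ih =>
      intro hj
      have prev := ih (by omega)
      have h1 : j + 1 ≤ ((closedNbhd G x)ᶜ).ncard := by omega
      obtain ⟨S, hSsub, hScard⟩ := Set.exists_subset_card_eq h1
      have := UBstep hn hnk h hl hSsub (by omega)
      omega
  have := haux (l - 2) (by omega)
  omega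

lemma diffGrow (hn : Fintype.card V = n) (hnk : k < n) (h : EveryKLIdentifying G k l)
    (hl : 2 ≤ l) {x y : V} (hxy : x ≠ y) : ∀ j, j + 2 ≤ l →
    n + 1 + j ≤ k + (closedNbhd G y \ closedNbhd G x).ncard := by
  intro j
  induction j with
  | zero =>
    intro hj
    have hymem : y ∉ ({x} : Set V) := fun hmem => hxy (Set.mem_singleton_iff.1 hmem).symm
    have hXcard : (insert y ({x} : Set V)).ncard = 2 := by
      rw [Set.ncard_insert_of_notMem hymem (Set.toFinite _), Set.ncard_singleton]
    have hneq : insert y ({x} : Set V) ≠ ({x} : Set V) :=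
      fun hEq => hymem (hEq ▸ Set.mem_insert y _)
    have key := keyA_nested hn hnk h (X := insert y ({x} : Set V)) (Y := ({x} : Set V))
      (by omega) (by rw [Set.ncard_singleton]; omega) hneq
      (nbhdSet_mono' (Set.subset_insert _ _))
    have hEq : nbhdSet G (insert y ({x} : Set V)) \ nbhdSet G ({x} : Set V)
        = closedNbhd G y \ closedNbhd G x := by
      ext w
      simp only [nbhdSet_insert', nbhdSet_singleton', Set.mem_diff, Set.mem_union]
      tauto
    rw [hEq] at key
    omega
  | succ j ih =>
    intro hj
    have prev := ih (by omega)
    set D0 := closedNbhd G y \ closedNbhd G x with hD0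
    have hins : D0.ncard ≤ (D0 \ {y}).ncard + 1 := by
      calc D0.ncard ≤ (insert y (D0 \ {y})).ncard :=
            Set.ncard_le_ncard (fun w hw => by
              by_cases hwy : w = y
              · subst hwy; exact Set.mem_insert _ _
              · exact Set.mem_insert_of_mem y ⟨hw, hwy⟩) (Set.toFinite _)
        _ ≤ (D0 \ {y}).ncard + 1 := Set.ncard_insert_le y _
    have h1 : j + 1 ≤ (D0 \ {y}).ncard := by omega
    obtain ⟨T, hTsub, hTcard⟩ := Set.exists_subset_card_eq h1
    have hTD : T ⊆ D0 := hTsub.trans diff_subset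
    have hxT : x ∉ T := fun hmem => (hTD hmem).2 (cn_self G x)
    have hyT : y ∉ T := fun hmem => (hTsub hmem).2 rfl
    have hYcard : (insert x T).ncard = j + 2 := by
      rw [Set.ncard_insert_of_notMem hxT (Set.toFinite _), hTcard]
    have hynotin : y ∉ insert x T := by
      intro hmem
      rcases Set.mem_insert_iff.1 hmem with rfl | hmem'
      · exact hxy rfl
      · exact hyT hmem'
    have hXcard : (insert y (insert x T)).ncard = j + 3 := by
      rw [Set.ncard_insert_of_notMem hynotin (Set.toFinite _), hYcard]
    have hneq : insert y (insert x T) ≠ insert x T :=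
      fun hEq => hynotin (hEq ▸ Set.mem_insert y _)
    have key := keyA_nested hn hnk h (X := insert y (insert x T)) (Y := insert x T)
      (by omega) (by omega) hneq (nbhdSet_mono' (Set.subset_insert _ _))
    set D := nbhdSet G (insert y (insert x T)) \ nbhdSet G (insert x T) with hDdef
    have hDsub : D ⊆ D0 := by
      intro w hw
      obtain ⟨hw1, hw2⟩ := hw
      rw [nbhdSet_insert'] at hw1
      rcases hw1 with hwy | hrest
      · refine ⟨hwy, ?_⟩
        intro hwx
        exact hw2 (by rw [nbhdSet_insert']; exact Set.mem_union_left _ hwx)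
      · exact absurd hrest hw2
    have hDT : ∀ w ∈ D, w ∉ T := by
      intro w hw hwT
      apply hw.2
      rw [nbhdSet_insert']
      exact Or.inr (subset_nbhdSet' hwT)
    have hcount := disj_count hDsub hTD hDT
    omega

lemma pairBound (hn : Fintype.card V = n) (hnk : k < n) (h : EveryKLIdentifying G k l)
    (hl : 2 ≤ l) {x y : V} (hxy : x ≠ y) :
    n + 2 * l ≤ k + 1 + ((closedNbhd G x ∩ closedNbhd G y)ᶜ).ncard := by
  have hyx := diffGrow hn hnk h hl hxy (l - 2) (by omega)
  have hxy' := diffGrow hn hnk h hl hxy.symm (l - 2) (by omega)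
  set Dyx := closedNbhd G y \ closedNbhd G x with hDyx
  set Dxy := closedNbhd G x \ closedNbhd G y with hDxy
  have hinsy : Dyx.ncard ≤ (Dyx \ {y}).ncard + 1 := by
    calc Dyx.ncard ≤ (insert y (Dyx \ {y})).ncard :=
          Set.ncard_le_ncard (fun w hw => by
            by_cases hwy : w = y
            · subst hwy; exact Set.mem_insert _ _
            · exact Set.mem_insert_of_mem y ⟨hw, hwy⟩) (Set.toFinite _)
      _ ≤ (Dyx \ {y}).ncard + 1 := Set.ncard_insert_le y _
  have hinsx : Dxy.ncard ≤ (Dxy \ {x}).ncard + 1 := by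
    calc Dxy.ncard ≤ (insert x (Dxy \ {x})).ncard :=
          Set.ncard_le_ncard (fun w hw => by
            by_cases hwx : w = x
            · subst hwx; exact Set.mem_insert _ _
            · exact Set.mem_insert_of_mem x ⟨hw, hwx⟩) (Set.toFinite _)
      _ ≤ (Dxy \ {x}).ncard + 1 := Set.ncard_insert_le x _
  have h1 : l - 1 ≤ (Dyx \ {y}).ncard := by omega
  have h2 : l - 1 ≤ (Dxy \ {x}).ncard := by omega
  obtain ⟨Sy, hSysub, hSycard⟩ := Set.exists_subset_card_eq h1
  obtain ⟨Sx, hSxsub, hSxcard⟩ := Set.exists_subset_card_eq h2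
  have hSyD : Sy ⊆ Dyx := hSysub.trans diff_subset
  have hSxD : Sx ⊆ Dxy := hSxsub.trans diff_subset
  have hxSy : x ∉ Sy := fun hmem => (hSyD hmem).2 (cn_self G x)
  have hySx : y ∉ Sx := fun hmem => (hSxD hmem).2 (cn_self G y)
  have hySy : y ∉ Sy := fun hmem => (hSysub hmem).2 rfl
  have hxSx : x ∉ Sx := fun hmem => (hSxsub hmem).2 rfl
  have hXcard : (insert x Sy).ncard = l - 1 + 1 := by
    rw [Set.ncard_insert_of_notMem hxSy (Set.toFinite _), hSycard]
  have hYcard : (insert y Sx).ncard = l - 1 + 1 := by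
    rw [Set.ncard_insert_of_notMem hySx (Set.toFinite _), hSxcard]
  have hneq : insert x Sy ≠ insert y Sx := by
    intro hEq
    have : x ∈ insert y Sx := hEq ▸ Set.mem_insert x _
    rcases Set.mem_insert_iff.1 this with rfl | hmem
    · exact hxy rfl
    · exact hxSx hmem
  have key := keyA hn hnk h (X := insert x Sy) (Y := insert y Sx)
    (by omega) (by omega) hneq
  set sd := symmDiff (nbhdSet G (insert x Sy)) (nbhdSet G (insert y Sx)) with hsd
  set T := (closedNbhd G x ∩ closedNbhd G y)ᶜ with hT
  have hmemX : ∀ w, w ∈ closedNbhd G x → w ∈ nbhdSet G (insert x Sy) := by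
    intro w hw
    rw [nbhdSet_insert']
    exact Or.inl hw
  have hmemY : ∀ w, w ∈ closedNbhd G y → w ∈ nbhdSet G (insert y Sx) := by
    intro w hw
    rw [nbhdSet_insert']
    exact Or.inl hw
  have hsdT : sd ⊆ T := by
    intro w hw
    intro hmem
    rcases Set.mem_symmDiff.1 hw with ⟨h1', h2'⟩ | ⟨h1', h2'⟩
    · exact h2' (hmemY w hmem.2)
    · exact h2' (hmemX w hmem.1)
  have hSyT : Sy ⊆ T := by
    intro w hw hmem
    exact (hSyD hw).2 hmem.1
  have hSxT : Sx ⊆ T := by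
    intro w hw hmem
    exact (hSxD hw).2 hmem.2
  have hsdSy : ∀ w ∈ sd, w ∉ Sy := by
    intro w hw hwSy
    have hinX : w ∈ nbhdSet G (insert x Sy) := subset_nbhdSet' (Set.mem_insert_of_mem x hwSy)
    have hinY : w ∈ nbhdSet G (insert y Sx) := hmemY w (hSyD hwSy).1
    rcases Set.mem_symmDiff.1 hw with ⟨_, h2'⟩ | ⟨_, h2'⟩
    · exact h2' hinY
    · exact h2' hinX
  have hsdSx : ∀ w ∈ sd, w ∉ Sx := by
    intro w hw hwSx
    have hinY : w ∈ nbhdSet G (insert y Sx) := subset_nbhdSet' (Set.mem_insert_of_mem y hwSx)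
    have hinX : w ∈ nbhdSet G (insert x Sy) := hmemX w (hSxD hwSx).1
    rcases Set.mem_symmDiff.1 hw with ⟨_, h2'⟩ | ⟨_, h2'⟩
    · exact h2' hinY
    · exact h2' hinX
  have hSySx : ∀ w ∈ Sy, w ∉ Sx := by
    intro w hw hw'
    exact (hSyD hw).2 (hSxD hw').1
  have c1 : sd.ncard + Sy.ncard ≤ (T \ Sx).ncard := by
    apply disj_count
    · intro w hw
      exact ⟨hsdT hw, hsdSx w hw⟩
    · intro w hw
      exact ⟨hSyT hw, hSySx w hw⟩
    · exact hsdSy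
  have c2 : (T \ Sx).ncard + Sx.ncard ≤ T.ncard :=
    disj_count diff_subset hSxT (fun w hw => hw.2)
  omega

end Aux

theorem stmt16 [Fintype V] (G : SimpleGraph V) (n k l : ℕ)
    (hn : Fintype.card V = n) (hl : 2 ≤ l) (hnk : k < n)
    (h : EveryKLIdentifying G k l) :
    (∀ x : V, n - k + l + 1 ≤ (closedNbhd G x).ncard ∧ (closedNbhd G x).ncard ≤ k - l) ∧
      (∀ x y : V, x ≠ y → (closedNbhd G x ∩ closedNbhd G y).ncard ≤ k - 2 * l + 1) ∧
      n ≤ 2 * k - 2 * l - 1 ∧ 2 * l + 2 ≤ k := by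
  have hne : Nonempty V := Fintype.card_pos_iff.1 (by omega)
  obtain ⟨x0⟩ := hne
  have hcompl : ∀ s : Set V, s.ncard + sᶜ.ncard = n := by
    intro s
    rw [Set.ncard_add_ncard_compl, Nat.card_eq_fintype_card, hn]
  have hmain : ∀ x : V, n - k + l + 1 ≤ (closedNbhd G x).ncard ∧ (closedNbhd G x).ncard ≤ k - l := by
    intro x
    have hlo := lower hn hnk h hl x
    have hup := upper hn hnk h hl x
    have hc := hcompl (closedNbhd G x)
    constructor <;> omega
  refine ⟨hmain, ?_, ?_, ?_⟩
  · intro x y hxy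
    have := pairBound hn hnk h hl hxy
    have hc := hcompl (closedNbhd G x ∩ closedNbhd G y)
    omega
  · have h1 := (hmain x0).1
    have h2 := (hmain x0).2
    have hlo := lower hn hnk h hl x0
    have hup := upper hn hnk h hl x0
    have hc := hcompl (closedNbhd G x0)
    omega
  · have hlo := lower hn hnk h hl x0
    have hup := upper hn hnk h hl x0
    have hc := hcompl (closedNbhd G x0)
    omega
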